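/- Let d ∈ ℕ, E = EuclideanSpace ℝ (Fin d) with standard basis vectors e j, let w, v ∈ E, i : Fin d, and C ≥ 0. Suppose ‖v‖ ≤ C, ⟪v, w⟫ ≤ 0, define μ : Fin d → ℝ by μ j = max 0 (−⟪e j, w + v⟫), assume μ j ≤ C for all j, and set η = 1/(4‖w‖ + 8C + 2). Then ‖w + v + η • (e i) + ∑_{j} (μ j) • (e j)‖² ≤ ‖w‖² + (d + 1)·C² + 1. -/

import Mathlib

open RealInnerProductSpace

theorem l1_update_norm_increase_step
    (d : ℕ) (w v : EuclideanSpace ℝ (Fin d)) (i : Fin d) (C : ℝ) (hC : 0 ≤ C)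
    (hv : ‖v‖ ≤ C) (hvw : ⟪v, w⟫ ≤ 0)
    (μ : Fin d → ℝ)
    (hμ : ∀ j, μ j = max 0 (-⟪EuclideanSpace.single j (1 : ℝ), w + v⟫))
    (hμC : ∀ j, μ j ≤ C)
    (η : ℝ) (hη : η = 1 / (4 * ‖w‖ + 8 * C + 2)) :
    ‖w + v + η • EuclideanSpace.single i (1 : ℝ) +
        ∑ j, μ j • EuclideanSpace.single j (1 : ℝ)‖ ^ 2 ≤
      ‖w‖ ^ 2 + (d + 1) * C ^ 2 + 1 := by
  set u : EuclideanSpace ℝ (Fin d) := w + v with hu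
  set t : EuclideanSpace ℝ (Fin d) :=
    η • EuclideanSpace.single i (1 : ℝ) + ∑ j, μ j • EuclideanSpace.single j (1 : ℝ) with ht
  have hD : (0:ℝ) < 4 * ‖w‖ + 8 * C + 2 := by positivity
  have hηpos : 0 < η := by rw [hη]; positivity
  have hηD : η * (4 * ‖w‖ + 8 * C + 2) = 1 := by rw [hη]; field_simp
  -- coordinates of u
  have hμu : ∀ j, μ j * u j = -(μ j) ^ 2 := by
    intro j
    have h : μ j = max 0 (-(u j)) := by
      rw [hμ j]; congr 1
      rw [EuclideanSpace.inner_single_left]; simp [hu]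
    rcases le_total (u j) 0 with h0 | h0
    · rw [h, max_eq_right (by linarith)]; ring
    · rw [h, max_eq_left (by linarith)]; ring
  -- coordinates of t
  have htj : ∀ j, t j = μ j + (if j = i then η else 0) := by
    intro j
    have hsa : (∑ x, μ x • EuclideanSpace.single x (1:ℝ)) j
        = ∑ x, (μ x • EuclideanSpace.single x (1:ℝ)) j :=
      by rw [WithLp.ofLp_sum]; exact Finset.sum_apply j Finset.univ _
    simp only [ht, PiLp.add_apply, PiLp.smul_apply, hsa,
      EuclideanSpace.single_apply, smul_eq_mul, mul_ite, mul_one, mul_zero]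
    rw [Finset.sum_ite_eq Finset.univ j μ]
    simp only [Finset.mem_univ, if_true]
    by_cases h : j = i <;> simp [h, add_comm]
  have hμnn : ∀ j, 0 ≤ μ j := by intro j; rw [hμ j]; exact le_max_left _ _
  -- norm of u
  have hu2 : ‖u‖ ^ 2 ≤ ‖w‖ ^ 2 + C ^ 2 := by
    have h1 := norm_add_sq_real w v
    have hwv : ⟪w, v⟫ ≤ 0 := by rwa [real_inner_comm]
    have hv2 : ‖v‖ ^ 2 ≤ C ^ 2 := by
      have := norm_nonneg v; nlinarith
    nlinarith [h1]
  -- inner u t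
  have hinner : ⟪u, t⟫ ≤ η * ‖u‖ := by
    have hexp : ⟪u, t⟫ = η * u i + ∑ j, μ j * u j := by
      simp only [ht, inner_add_right, inner_smul_right, inner_sum]
      congr 1
      · rw [EuclideanSpace.inner_single_right]; simp
      · refine Finset.sum_congr rfl fun j _ => ?_
        rw [EuclideanSpace.inner_single_right]; simp
    have hsum : ∑ j, μ j * u j ≤ 0 := by
      apply Finset.sum_nonpos
      intro j _
      rw [hμu j]
      exact neg_nonpos.mpr (sq_nonneg _)
    have hui : u i ≤ ‖u‖ := by
      have h : u i = ⟪EuclideanSpace.single i (1:ℝ), u⟫ := by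
        rw [EuclideanSpace.inner_single_left]; simp
      rw [h]
      calc ⟪EuclideanSpace.single i (1:ℝ), u⟫ ≤ ‖EuclideanSpace.single i (1:ℝ)‖ * ‖u‖ :=
            real_inner_le_norm _ _
        _ = ‖u‖ := by rw [EuclideanSpace.norm_single]; simp
    nlinarith
  -- norm of t
  have ht2 : ‖t‖ ^ 2 ≤ d * C ^ 2 + 2 * η * C + η ^ 2 := by
    have hnt : ‖t‖ ^ 2 = ∑ j, (t j) ^ 2 := by
      rw [PiLp.norm_sq_eq_of_L2]
      exact Finset.sum_congr rfl fun j _ => by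
        rw [Real.norm_eq_abs, sq_abs]
    rw [hnt]
    have hsplit : ∑ j, (t j) ^ 2
        = ∑ j, ((μ j) ^ 2 + (if j = i then 2 * η * μ j + η ^ 2 else 0)) := by
      refine Finset.sum_congr rfl fun j _ => ?_
      rw [htj j]
      by_cases h : j = i <;> simp [h] <;> ring
    rw [hsplit, Finset.sum_add_distrib, Finset.sum_ite_eq' Finset.univ i
      (fun j => 2 * η * μ j + η ^ 2)]
    simp only [Finset.mem_univ, if_true]
    have h1 : ∑ j, (μ j) ^ 2 ≤ (d : ℝ) * C ^ 2 := by
      calc ∑ j : Fin d, (μ j) ^ 2 ≤ ∑ _j : Fin d, C ^ 2 :=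
            Finset.sum_le_sum fun j _ => by nlinarith [hμnn j, hμC j]
        _ = (d : ℝ) * C ^ 2 := by simp [mul_comm]
    have h2 : 2 * η * μ i ≤ 2 * η * C := by nlinarith [hμC i]
    linarith
  -- numeric bounds on η
  have hηe : 4 * (η * ‖w‖) + 8 * (η * C) + 2 * η = 1 := by linear_combination hηD
  have hp1 : 0 ≤ η * ‖w‖ := mul_nonneg hηpos.le (norm_nonneg w)
  have hp2 : 0 ≤ η * C := mul_nonneg hηpos.le hC
  have hη1 : 2 * (η * ‖u‖) ≤ 1 / 2 := by
    have hun : ‖u‖ ≤ ‖w‖ + C := by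
      calc ‖u‖ ≤ ‖w‖ + ‖v‖ := norm_add_le _ _
        _ ≤ ‖w‖ + C := by linarith
    have e2 : η * ‖u‖ ≤ η * (‖w‖ + C) := mul_le_mul_of_nonneg_left hun hηpos.le
    have e3 : η * (‖w‖ + C) = η * ‖w‖ + η * C := by ring
    linarith
  have hη2 : 2 * η * C ≤ 1 / 4 := by
    have : 2 * η * C = 2 * (η * C) := by ring
    linarith
  have hη3 : η ^ 2 ≤ 1 / 4 := by
    have hle : η ≤ 1 / 2 := by linarith
    nlinarith
  have hfin : ‖w + v + η • EuclideanSpace.single i (1 : ℝ) +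
      ∑ j, μ j • EuclideanSpace.single j (1 : ℝ)‖ ^ 2 = ‖u + t‖ ^ 2 := by
    rw [hu, ht, add_assoc]
  rw [hfin, norm_add_sq_real]
  push_cast
  linarith [hinner, ht2, hu2, hη1, hη2, hη3]
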